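/- Let A' ⊆ ℕ be a set such that whenever B' + B' + t' ⊆ A' for some B' ⊆ ℕ and t' ∈ ℕ, the set B' is finite. Define A = {x ∈ ℤ^d : ‖x‖_∞ ∈ A'}. Then whenever B + B + t ⊆ A for some B ⊆ ℤ^d and t ∈ ℤ^d, the set B is finite. -/

import Mathlib

open Filter Pointwise
open scoped Classical

/-- The doubling map `g ↦ g + g` as an additive homomorphism. -/
def doubleHom (G : Type*) [AddCommGroup G] : G →+ G where
  toFun g := g + g
  map_zero' := by simp
  map_add' := by intro a b; abel

/-- The subgroup `2G = {g + g : g ∈ G}`. -/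
def twoG (G : Type*) [AddCommGroup G] : AddSubgroup G := (doubleHom G).range

/-- A Følner sequence: finite sets with `|Φ_N ∩ (g + Φ_N)|/|Φ_N| → 1` for every `g`. -/
def IsFolner {G : Type*} [AddCommGroup G] (Φ : ℕ → Finset G) : Prop :=
  ∀ g : G, Tendsto
    (fun N => (((Φ N) ∩ (Φ N).image (fun x => g + x)).card : ℝ) / ((Φ N).card : ℝ))
    atTop (nhds 1)

theorem stmt17 (d : ℕ) (A' : Set ℕ)
    (hA' : ∀ (B' : Set ℕ) (t' : ℕ), B' + B' + ({t'} : Set ℕ) ⊆ A' → B'.Finite)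
    (B : Set (Fin d → ℤ)) (t : Fin d → ℤ)
    (hB : B + B + ({t} : Set (Fin d → ℤ)) ⊆
      {x : Fin d → ℤ | (Finset.univ.sup (fun i => (x i).natAbs)) ∈ A'}) :
    B.Finite := by
  rcases Nat.eq_zero_or_pos d with rfl | hd
  · exact Set.toFinite B
  by_contra hBinf
  rw [← Set.not_infinite, not_not] at hBinf
  set T : ℕ := Finset.univ.sup (fun j => (t j).natAbs) with hTdef
  have hTt : ∀ j, |t j| ≤ (T : ℤ) := by
    intro j
    rw [Int.abs_eq_natAbs]
    exact_mod_cast Finset.le_sup (f := fun j => (t j).natAbs) (Finset.mem_univ j)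
  set nrm : (Fin d → ℤ) → ℕ := fun x => Finset.univ.sup fun j => (x j).natAbs with hnrmdef
  have hne : (Finset.univ : Finset (Fin d)).Nonempty := ⟨⟨0, hd⟩, Finset.mem_univ _⟩
  have hnrm_le : ∀ (x : Fin d → ℤ) j, (x j).natAbs ≤ nrm x := fun x j =>
    Finset.le_sup (f := fun j => (x j).natAbs) (Finset.mem_univ j)
  have hcast : ∀ x : Fin d → ℤ, ((nrm x : ℕ) : ℤ) = Finset.univ.sup' hne fun j => |x j| := by
    intro x
    rw [show nrm x = Finset.univ.sup' hne fun j => (x j).natAbs from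
      (Finset.sup'_eq_sup hne _).symm]
    rw [Finset.comp_sup'_eq_sup'_comp hne (Nat.cast : ℕ → ℤ) (fun a b => by
      simp [Nat.cast_max])]
    congr 1
    funext j
    exact (Int.abs_eq_natAbs (x j)).symm
  -- balls are finite
  have hfin_ball : ∀ M : ℕ, {x : Fin d → ℤ | nrm x ≤ M}.Finite := by
    intro M
    have hsub : {x : Fin d → ℤ | nrm x ≤ M} ⊆
        Set.pi Set.univ (fun _ : Fin d => Set.Icc (-(M : ℤ)) (M : ℤ)) := by
      intro x hx j _
      have h1 : (x j).natAbs ≤ M := le_trans (hnrm_le x j) hx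
      have h2 : |x j| ≤ (M : ℤ) := by
        rw [Int.abs_eq_natAbs]; exact_mod_cast h1
      exact Set.mem_Icc.2 (abs_le.1 h2)
    exact (Set.Finite.pi fun _ => Set.finite_Icc _ _).subset hsub
  -- argmax function
  let amax : (Fin d → ℤ) → Fin d := fun x =>
    (Finset.exists_mem_eq_sup Finset.univ hne fun j => (x j).natAbs).choose
  have hamax : ∀ x, nrm x = (x (amax x)).natAbs := fun x =>
    (Finset.exists_mem_eq_sup Finset.univ hne fun j => (x j).natAbs).choose_spec.2
  -- the class map
  let κ : (Fin d → ℤ) → Fin d × (Fin d → Bool) × (Fin d → Fin (2*T+2)) := fun x =>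
    (amax x, fun j => decide (0 ≤ x j),
      fun j => ⟨min (nrm x - (x j).natAbs) (2*T+1), Nat.lt_succ_of_le (min_le_right _ _)⟩)
  set B₁ : Set (Fin d → ℤ) := B \ {b | nrm b ≤ 3*T+1} with hB₁def
  have hB₁inf : B₁.Infinite := hBinf.diff (hfin_ball (3*T+1))
  have hpig : ∃ z, {b ∈ B₁ | κ b = z}.Infinite := by
    by_contra h
    push_neg at h
    have hsub : B₁ ⊆ ⋃ z ∈ (Finset.univ : Finset (Fin d × (Fin d → Bool) × (Fin d → Fin (2*T+2)))),
        {b ∈ B₁ | κ b = z} := fun b hb => Set.mem_biUnion (Finset.mem_univ _) ⟨hb, rfl⟩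
    exact hB₁inf ((Set.Finite.biUnion (Finset.univ : Finset _).finite_toSet
      (fun z _ => h z)).subset hsub)
  obtain ⟨⟨i, ε, c⟩, hC⟩ := hpig
  set C : Set (Fin d → ℤ) := {b ∈ B₁ | κ b = (i, ε, c)} with hCdef
  -- basic facts about members of C
  have hCB : ∀ b ∈ C, b ∈ B := fun b hb => hb.1.1
  have hCbig : ∀ b ∈ C, 3*T+2 ≤ nrm b := by
    intro b hb
    have := hb.1.2
    simp only [Set.mem_setOf_eq] at this
    omega
  have hCc : ∀ b ∈ C, ∀ j, (c j : ℕ) = min (nrm b - (b j).natAbs) (2*T+1) := by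
    intro b hb j
    have h2 := congrArg (fun p => ((p.2.2 j : Fin (2*T+2)) : ℕ)) hb.2
    exact h2.symm
  have hCε : ∀ b ∈ C, ∀ j, ε j = decide (0 ≤ b j) := by
    intro b hb j
    have h2 := congrArg (fun p => p.2.1 j) hb.2
    exact h2.symm
  have hCi : ∀ b ∈ C, (b i).natAbs = nrm b := by
    intro b hb
    have h1 := congrArg (fun p => p.1) hb.2
    simp only at h1
    rw [← h1]
    exact (hamax b).symm
  have hci : (c i : ℕ) = 0 := by
    obtain ⟨b₀, hb₀⟩ := hC.nonempty
    rw [hCc b₀ hb₀ i, hCi b₀ hb₀]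
    simp
  set σ : Fin d → ℤ := fun j => if ε j then 1 else -1 with hσdef
  set G : Finset (Fin d) := Finset.univ.filter fun j => (c j : ℕ) ≤ 2*T with hGdef
  have hiG : i ∈ G := by
    simp [hGdef, hci]
  have hG : G.Nonempty := ⟨i, hiG⟩
  set s : ℤ := G.sup' hG fun j => σ j * t j - 2*(c j : ℕ) with hsdef
  have hσabs : ∀ j, |σ j * t j| = |t j| := by
    intro j
    rcases Bool.eq_false_or_eq_true (ε j) with h | h <;> simp [hσdef, h, abs_mul]
  have hs_lb : -(T : ℤ) ≤ s := by
    have h1 : σ i * t i - 2*((c i : ℕ) : ℤ) ≤ s :=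
      Finset.le_sup' (fun j => σ j * t j - 2*((c j : ℕ) : ℤ)) hiG
    have h2 : -(T:ℤ) ≤ σ i * t i := by
      have := neg_abs_le (σ i * t i)
      rw [hσabs i] at this
      have := hTt i
      linarith [neg_abs_le (t i), abs_nonneg (t i)]
    rw [hci] at h1
    push_cast at h1
    linarith
  -- key fact about members of C in good coordinates
  have hkey : ∀ b ∈ C, ∀ j ∈ G,
      ((b j).natAbs : ℤ) = (nrm b : ℤ) - (c j : ℕ) ∧
      b j = σ j * (b j).natAbs := by
    intro b hb j hjG
    have hcj := hCc b hb j
    have hjG' : (c j : ℕ) ≤ 2*T := by simpa [hGdef] using hjG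
    have hle : (b j).natAbs ≤ nrm b := hnrm_le b j
    have hbig := hCbig b hb
    have h1 : (c j : ℕ) = nrm b - (b j).natAbs := by omega
    have h2 : ((b j).natAbs : ℤ) = (nrm b : ℤ) - (c j : ℕ) := by
      omega
    refine ⟨h2, ?_⟩
    have hε := hCε b hb j
    by_cases h0 : 0 ≤ b j
    · have hεj : ε j = true := by rw [hε]; simp [h0]
      have hbj : b j = ((b j).natAbs : ℤ) := by omega
      rw [show σ j = 1 by simp [hσdef, hεj], one_mul]
      exact hbj
    · have hεj : ε j = false := by rw [hε]; simp [h0]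
      have hbj : b j = -(((b j).natAbs : ℤ)) := by omega
      rw [show σ j = -1 by simp [hσdef, hεj], neg_one_mul]
      exact hbj
  -- per-coordinate values
  have hval : ∀ b ∈ C, ∀ b' ∈ C, ∀ j ∈ G,
      |b j + b' j + t j| = (nrm b : ℤ) + (nrm b' : ℤ) - 2*(c j : ℕ) + σ j * t j := by
    intro b hb b' hb' j hjG
    obtain ⟨h1, h2⟩ := hkey b hb j hjG
    obtain ⟨h1', h2'⟩ := hkey b' hb' j hjG
    have hbig := hCbig b hb
    have hbig' := hCbig b' hb'
    have hjG' : (c j : ℕ) ≤ 2*T := by simpa [hGdef] using hjG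
    have habs : ((b j).natAbs : ℤ) ≥ (T:ℤ) + 2 := by rw [h1]; omega
    have habs' : ((b' j).natAbs : ℤ) ≥ (T:ℤ) + 2 := by rw [h1']; omega
    obtain ⟨htl, htu⟩ := abs_le.1 (hTt j)
    by_cases h : ε j = true
    · have hσj : σ j = 1 := by simp [hσdef, h]
      rw [hσj, one_mul] at h2 h2'
      rw [hσj, abs_of_nonneg (by linarith)]
      omega
    · have hσj : σ j = -1 := by simp [hσdef, h]
      rw [hσj, neg_one_mul] at h2 h2'
      rw [hσj, abs_of_nonpos (by linarith)]
      omega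
  -- bad coordinates are dominated
  have hbad : ∀ b ∈ C, ∀ b' ∈ C, ∀ j, j ∉ G →
      |b j + b' j + t j| ≤ (nrm b : ℤ) + (nrm b' : ℤ) - 3*(T:ℤ) - 2 := by
    intro b hb b' hb' j hjG
    have hcj := hCc b hb j
    have hcj' := hCc b' hb' j
    have hjG' : ¬ (c j : ℕ) ≤ 2*T := by simpa [hGdef] using hjG
    have hle : (b j).natAbs ≤ nrm b := hnrm_le b j
    have hle' : (b' j).natAbs ≤ nrm b' := hnrm_le b' j
    have h1 : ((b j).natAbs : ℤ) ≤ (nrm b : ℤ) - (2*T+1) := by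
      have : 2*T+1 ≤ nrm b - (b j).natAbs := by omega
      omega
    have h1' : ((b' j).natAbs : ℤ) ≤ (nrm b' : ℤ) - (2*T+1) := by
      have : 2*T+1 ≤ nrm b' - (b' j).natAbs := by omega
      omega
    have ht := hTt j
    have hb1 : |b j| ≤ (nrm b : ℤ) - (2*T+1) := by rwa [Int.abs_eq_natAbs]
    have hb1' : |b' j| ≤ (nrm b' : ℤ) - (2*T+1) := by rwa [Int.abs_eq_natAbs]
    calc |b j + b' j + t j| ≤ |b j| + |b' j| + |t j| := by
          exact le_trans (abs_add_le _ _) (add_le_add_left (abs_add_le _ _) _)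
      _ ≤ ((nrm b : ℤ) - (2*T+1)) + ((nrm b' : ℤ) - (2*T+1)) + T := by
          exact add_le_add (add_le_add hb1 hb1') ht
      _ ≤ (nrm b : ℤ) + (nrm b' : ℤ) - 3*(T:ℤ) - 2 := by linarith
  -- the main formula
  have hmain : ∀ b ∈ C, ∀ b' ∈ C,
      ((nrm (b + b' + t) : ℕ) : ℤ) = (nrm b : ℤ) + (nrm b' : ℤ) + s := by
    intro b hb b' hb'
    rw [hcast]
    apply le_antisymm
    · apply Finset.sup'_le
      intro j _
      have hj : (b + b' + t) j = b j + b' j + t j := rfl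
      rw [hj]
      by_cases hjG : j ∈ G
      · rw [hval b hb b' hb' j hjG]
        have : σ j * t j - 2*((c j : ℕ) : ℤ) ≤ s :=
          Finset.le_sup' (fun j => σ j * t j - 2*((c j : ℕ) : ℤ)) hjG
        linarith
      · have := hbad b hb b' hb' j hjG
        linarith [hs_lb]
    · obtain ⟨j, hjG, hjs⟩ := Finset.exists_mem_eq_sup' hG
        (fun j => σ j * t j - 2*((c j : ℕ) : ℤ))
      have hj : (b + b' + t) j = b j + b' j + t j := rfl
      have := hval b hb b' hb' j hjG
      calc (nrm b : ℤ) + (nrm b' : ℤ) + s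
          = |b j + b' j + t j| := by rw [this, hsdef, hjs]; ring
        _ ≤ _ := by
            rw [← hj]
            exact Finset.le_sup' (fun j => |(b + b' + t) j|) (Finset.mem_univ j)
  -- construct B' and t'
  set B' : Set ℕ := (fun b => nrm b - T) '' C with hB'def
  set t' : ℕ := (s + 2*T).toNat with ht'def
  have ht'cast : (t' : ℤ) = s + 2*T := by
    rw [ht'def, Int.toNat_of_nonneg (a := s + 2*(T:ℤ)) (by linarith [hs_lb])]
  have hsub : B' + B' + ({t'} : Set ℕ) ⊆ A' := by
    rintro n hn
    rw [Set.mem_add] at hn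
    obtain ⟨m, hm, u, hu, rfl⟩ := hn
    rw [Set.mem_singleton_iff] at hu
    subst hu
    rw [Set.mem_add] at hm
    obtain ⟨p, hp, q, hq, rfl⟩ := hm
    obtain ⟨b, hb, rfl⟩ := hp
    obtain ⟨b', hb', rfl⟩ := hq
    have hbig := hCbig b hb
    have hbig' := hCbig b' hb'
    have heq : (nrm b - T) + (nrm b' - T) + t' = nrm (b + b' + t) := by
      have h := hmain b hb b' hb'
      have : (((nrm b - T) + (nrm b' - T) + t' : ℕ) : ℤ) = ((nrm (b + b' + t) : ℕ) : ℤ) := by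
        push_cast [Nat.cast_sub (by omega : T ≤ nrm b), Nat.cast_sub (by omega : T ≤ nrm b')]
        rw [ht'cast, h]
        ring
      exact_mod_cast this
    rw [heq]
    have hmem : b + b' + t ∈ B + B + ({t} : Set (Fin d → ℤ)) :=
      Set.add_mem_add (Set.add_mem_add (hCB b hb) (hCB b' hb')) rfl
    exact hB hmem
  have hB'fin : B'.Finite := hA' B' t' hsub
  -- conclude C is finite, contradiction
  have hCfin : C.Finite := by
    have hsub2 : C ⊆ ⋃ n ∈ hB'fin.toFinset, {b : Fin d → ℤ | nrm b ≤ n + T} := by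
      intro b hb
      have hbig := hCbig b hb
      refine Set.mem_biUnion (hB'fin.mem_toFinset.2 ⟨b, hb, rfl⟩) ?_
      simp only [Set.mem_setOf_eq]
      omega
    exact (Set.Finite.biUnion hB'fin.toFinset.finite_toSet
      (fun n _ => hfin_ball (n + T))).subset hsub2
  exact hC hCfin
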